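/- For any inner function u, C_u D_u C_u = D_u^*, i.e. the dual compressed shift is a complex symmetric operator with respect to the conjugation C_u. -/

import Mathlib

open MeasureTheory Complex AddCircle

noncomputable section

namespace Paper

/-- The period `2π`. -/
abbrev T : ℝ := 2 * Real.pi

instance : Fact (0 < T) := ⟨by positivity⟩

/-- Normalized Lebesgue (Haar) measure on the circle. -/
abbrev μ : Measure (AddCircle T) := haarAddCircle

/-- The space `L²(𝕋, dm)`. -/
abbrev L2 : Type := Lp ℂ 2 μ

lemma memLp_mul {u : AddCircle T → ℂ} (hm : AEStronglyMeasurable u μ)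
    (hb : ∀ᵐ x ∂μ, ‖u x‖ ≤ 1) (f : L2) :
    MemLp (fun x => u x * (f : AddCircle T → ℂ) x) 2 μ := by
  refine (Lp.memLp f).of_le (hm.mul (Lp.aestronglyMeasurable f)) ?_
  filter_upwards [hb] with x hx
  calc ‖u x * (f : AddCircle T → ℂ) x‖ = ‖u x‖ * ‖(f : AddCircle T → ℂ) x‖ := norm_mul _ _
    _ ≤ 1 * ‖(f : AddCircle T → ℂ) x‖ := by gcongr
    _ = ‖(f : AddCircle T → ℂ) x‖ := one_mul _

/-- Multiplication by a measurable function bounded by `1`, as a bounded operator on `L²`. -/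
def mulCLM (u : AddCircle T → ℂ) (hm : AEStronglyMeasurable u μ)
    (hb : ∀ᵐ x ∂μ, ‖u x‖ ≤ 1) : L2 →L[ℂ] L2 :=
  LinearMap.mkContinuous
    { toFun := fun f => (memLp_mul hm hb f).toLp _
      map_add' := fun f g => by
        show MemLp.toLp _ (memLp_mul hm hb (f + g)) = _
        have h : (fun x => u x * ((f + g : L2) : AddCircle T → ℂ) x)
            =ᵐ[μ] (fun x => u x * (f : AddCircle T → ℂ) x)
              + (fun x => u x * (g : AddCircle T → ℂ) x) := by
          filter_upwards [Lp.coeFn_add f g] with x hx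
          simp only [Pi.add_apply, hx, mul_add]
        rw [MemLp.toLp_congr (memLp_mul hm hb (f + g))
          ((memLp_mul hm hb f).add (memLp_mul hm hb g)) h, MemLp.toLp_add]
      map_smul' := fun c f => by
        have h : (fun x => u x * ((c • f : L2) : AddCircle T → ℂ) x)
            =ᵐ[μ] c • (fun x => u x * (f : AddCircle T → ℂ) x) := by
          filter_upwards [Lp.coeFn_smul c f] with x hx
          simp only [Pi.smul_apply, hx, smul_eq_mul]
          ring
        simp only [RingHom.id_apply]
        rw [MemLp.toLp_congr (memLp_mul hm hb (c • f))
          ((memLp_mul hm hb f).const_smul c) h, MemLp.toLp_const_smul] }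
    1
    (fun f => by
      simp only [LinearMap.coe_mk, AddHom.coe_mk, one_mul]
      rw [Lp.norm_toLp]
      have h1 : eLpNorm (fun x => u x * (f : AddCircle T → ℂ) x) 2 μ
          ≤ eLpNorm (f : AddCircle T → ℂ) 2 μ := by
        refine eLpNorm_mono_ae ?_
        filter_upwards [hb] with x hx
        calc ‖u x * (f : AddCircle T → ℂ) x‖
            = ‖u x‖ * ‖(f : AddCircle T → ℂ) x‖ := norm_mul _ _
          _ ≤ 1 * ‖(f : AddCircle T → ℂ) x‖ := by gcongr
          _ = ‖(f : AddCircle T → ℂ) x‖ := one_mul _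
      calc (eLpNorm (fun x => u x * (f : AddCircle T → ℂ) x) 2 μ).toReal
          ≤ (eLpNorm (f : AddCircle T → ℂ) 2 μ).toReal :=
            ENNReal.toReal_mono (Lp.eLpNorm_ne_top f) h1
        _ = ‖f‖ := (Lp.norm_def f).symm)

lemma memLp_conj (f : L2) :
    MemLp (fun x => (starRingEnd ℂ) ((f : AddCircle T → ℂ) x)) 2 μ := by
  refine (Lp.memLp f).of_le ?_ ?_
  · exact Complex.continuous_conj.comp_aestronglyMeasurable (Lp.aestronglyMeasurable f)
  · filter_upwards with x
    simp

/-- Complex conjugation on `L²`. -/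
def conjL2 (f : L2) : L2 := (memLp_conj f).toLp _

/-- The independent variable `z = e^{iθ}` as a function on the circle. -/
def zfun : AddCircle T → ℂ := fun x => fourier 1 x

lemma zfun_meas : AEStronglyMeasurable zfun μ :=
  ((map_continuous (fourier (T := T) 1)).aestronglyMeasurable)

lemma zfun_norm : ∀ᵐ x ∂μ, ‖zfun x‖ ≤ 1 := by
  filter_upwards with x
  simp [zfun, Circle.norm_coe]

/-- Multiplication by `z` (the bilateral shift `M` on `L²`). -/
def Mz : L2 →L[ℂ] L2 := mulCLM zfun zfun_meas zfun_norm

/-- Multiplication by `conj z`. -/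
def Mzbar : L2 →L[ℂ] L2 :=
  mulCLM (fun x => (starRingEnd ℂ) (zfun x))
    (Complex.continuous_conj.comp_aestronglyMeasurable zfun_meas)
    (by filter_upwards with x; simp [zfun, Circle.norm_coe])

/-- The Hardy space `H² = {f ∈ L² : f̂(n) = 0 for all n < 0}`. -/
def H2 : Submodule ℂ L2 where
  carrier := {f | ∀ n : ℤ, n < 0 → fourierBasis.repr f n = 0}
  add_mem' := by
    intro f g hf hg n hn
    simp [map_add, hf n hn, hg n hn]
  zero_mem' := by intro n hn; simp
  smul_mem' := by
    intro c f hf n hn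
    simp [_root_.map_smul, hf n hn]

lemma continuous_coeff (n : ℤ) :
    Continuous fun f : L2 => fourierBasis.repr f n := by
  rw [Metric.continuous_iff]
  intro f ε hε
  refine ⟨ε, hε, fun g hg => ?_⟩
  have h1 : fourierBasis.repr g n - fourierBasis.repr f n = fourierBasis.repr (g - f) n := by
    simp [map_sub]
  have h2 : ‖fourierBasis.repr (g - f) n‖ ≤ ‖fourierBasis.repr (g - f)‖ :=
    lp.norm_apply_le_norm (by norm_num) _ n
  have h3 : ‖fourierBasis.repr (g - f)‖ = ‖g - f‖ :=
    fourierBasis.repr.norm_map _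
  calc dist (fourierBasis.repr g n) (fourierBasis.repr f n)
      = ‖fourierBasis.repr (g - f) n‖ := by rw [dist_eq_norm, h1]
    _ ≤ ‖g - f‖ := by rw [← h3]; exact h2
    _ = dist g f := (dist_eq_norm g f).symm
    _ < ε := hg

lemma H2_isClosed : IsClosed (H2 : Set L2) := by
  have : (H2 : Set L2) =
      ⋂ n ∈ {m : ℤ | m < 0}, {f : L2 | fourierBasis.repr f n = 0} := by
    ext f
    simp only [Set.mem_iInter, Set.mem_setOf_eq]
    rfl
  rw [this]
  exact isClosed_biInter fun n _ => isClosed_eq (continuous_coeff n) continuous_const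

instance : CompleteSpace H2 := H2_isClosed.completeSpace_coe

/-- The Riesz projection `P⁺` of `L²` onto `H²`. -/
def Pp : L2 →L[ℂ] L2 := H2.subtypeL ∘L H2.orthogonalProjectionOnto

/-- The projection `P⁻ = I − P⁺` of `L²` onto `conj(H²₀)`. -/
def Pm : L2 →L[ℂ] L2 := ContinuousLinearMap.id ℂ L2 - Pp

/-- `conj(H²₀) = {f ∈ L² : f̂(n) = 0 for all n ≥ 0}`, the orthogonal complement of `H²`. -/
def Hm : Submodule ℂ L2 where
  carrier := {f | ∀ n : ℤ, 0 ≤ n → fourierBasis.repr f n = 0}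
  add_mem' := by
    intro f g hf hg n hn
    simp [map_add, hf n hn, hg n hn]
  zero_mem' := by intro n hn; simp
  smul_mem' := by
    intro c f hf n hn
    simp [_root_.map_smul, hf n hn]

/-- The constant function `1` as an element of `L²`. -/
def oneL2 : L2 := (memLp_const (1 : ℂ)).toLp _

/-- An inner function: a bounded measurable unimodular function on the circle whose
negative Fourier coefficients vanish. -/
structure InnerData where
  u : AddCircle T → ℂ
  meas : AEStronglyMeasurable u μ
  unim : ∀ᵐ x ∂μ, ‖u x‖ = 1
  anal : ∀ n : ℤ, n < 0 → fourierCoeff u n = 0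

namespace InnerData

variable (U : InnerData)

lemma bd : ∀ᵐ x ∂μ, ‖U.u x‖ ≤ 1 := by
  filter_upwards [U.unim] with x hx
  rw [hx]

/-- Multiplication by `u`: the operator `M_u` on `L²`. -/
def M : L2 →L[ℂ] L2 := mulCLM U.u U.meas U.bd

/-- Multiplication by `conj u`: the operator `M_{conj u}` on `L²`. -/
def Mc : L2 →L[ℂ] L2 :=
  mulCLM (fun x => (starRingEnd ℂ) (U.u x))
    (Complex.continuous_conj.comp_aestronglyMeasurable U.meas)
    (by filter_upwards [U.bd] with x hx; simpa using hx)

/-- `u` as an element of `L²`. -/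
def toL2 : L2 :=
  (memLp_top_of_bound U.meas 1 U.bd |>.mono_exponent le_top).toLp _

/-- The value `u(0)` of (the analytic extension of) `u` at the origin, i.e. the mean of `u`. -/
def a0 : ℂ := fourierCoeff U.u 0

/-- The subspace `uH²`. -/
def uH2 : Submodule ℂ L2 := Submodule.map (U.M : L2 →ₗ[ℂ] L2) H2

/-- The model space `K_u = H² ∩ (uH²)ᗮ`. -/
def Ku : Submodule ℂ L2 := H2 ⊓ (U.uH2)ᗮ

lemma Ku_isClosed : IsClosed (U.Ku : Set L2) := by
  have : (U.Ku : Set L2) = (H2 : Set L2) ∩ ((U.uH2)ᗮ : Set L2) := rfl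
  rw [this]
  exact H2_isClosed.inter (U.uH2).isClosed_orthogonal

instance : CompleteSpace U.Ku := U.Ku_isClosed.completeSpace_coe

/-- `K_u^⊥`, the orthogonal complement of the model space in `L²`. -/
def KP : Submodule ℂ L2 := (U.Ku)ᗮ

instance : CompleteSpace U.KP := (U.Ku).isClosed_orthogonal.completeSpace_coe

/-- The orthogonal projection `P_u : L² → K_u` (viewed as an operator on `L²`). -/
def Pu : L2 →L[ℂ] L2 := (U.Ku).subtypeL ∘L (U.Ku).orthogonalProjectionOnto

/-- The dual of the compressed shift: `D_u = (I − P_u) M_z |_{K_u^⊥}`. -/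
def Du : U.KP →L[ℂ] U.KP :=
  (U.KP).orthogonalProjectionOnto ∘L Mz ∘L (U.KP).subtypeL

/-- The conjugation `C_u f = u · conj(z f)` on `L²`. -/
def C (f : L2) : L2 := U.M (conjL2 (Mz f))

/-- The reproducing kernel of `K_u` at `0`: `k₀ᵘ = 1 − conj(u(0))·u`. -/
def k0 : L2 := oneL2 - (starRingEnd ℂ) U.a0 • U.toL2

/-- The similarity `V_u = P⁻ + (conj u/conj u(0)) P⁺` of the paper. -/
def V : L2 →L[ℂ] L2 := Pm + ((starRingEnd ℂ) U.a0)⁻¹ • (U.Mc ∘L Pp)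

/-- The inverse similarity `V_u⁻¹ = P⁻ + conj(u(0)) u P⁺`. -/
def Vinv : L2 →L[ℂ] L2 := Pm + (starRingEnd ℂ) U.a0 • (U.M ∘L Pp)

end InnerData

lemma Mz_mem_H2 {f : L2} (hf : f ∈ H2) : Mz f ∈ H2 := by
  intro n hn
  rw [fourierBasis_repr]
  have hcoe : (Mz f : AddCircle T → ℂ) =ᵐ[μ] fun x => zfun x * (f : AddCircle T → ℂ) x :=
    MemLp.coeFn_toLp (memLp_mul zfun_meas zfun_norm f)
  have h1 : fourierCoeff (Mz f : AddCircle T → ℂ) n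
      = fourierCoeff (f : AddCircle T → ℂ) (n - 1) := by
    unfold fourierCoeff
    rw [integral_congr_ae (by filter_upwards [hcoe] with x hx; rw [hx])]
    refine integral_congr_ae ?_
    filter_upwards with x
    have : fourier (-n) x * zfun x = fourier (-(n - 1)) x := by
      unfold zfun
      rw [show (-(n - 1) : ℤ) = -n + 1 by ring, fourier_add]
    simp only [smul_eq_mul]
    calc fourier (-n) x * (zfun x * (f : AddCircle T → ℂ) x)
        = (fourier (-n) x * zfun x) * (f : AddCircle T → ℂ) x := by ring
      _ = fourier (-(n - 1)) x * (f : AddCircle T → ℂ) x := by rw [this]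
  rw [h1]
  have := hf (n - 1) (by omega)
  rwa [fourierBasis_repr] at this

/-- The unilateral shift `S` on `H²`. -/
def Shift : H2 →L[ℂ] H2 :=
  (Mz ∘L H2.subtypeL).codRestrict H2 (fun x => Mz_mem_H2 x.2)

open scoped ComplexInnerProductSpace

lemma mulCLM_coe (u : AddCircle T → ℂ) (hm : AEStronglyMeasurable u μ)
    (hb : ∀ᵐ x ∂μ, ‖u x‖ ≤ 1) (f : L2) :
    (mulCLM u hm hb f : AddCircle T → ℂ)
      =ᵐ[μ] fun x => u x * (f : AddCircle T → ℂ) x :=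
  MemLp.coeFn_toLp (memLp_mul hm hb f)

lemma Mz_coe (f : L2) :
    (Mz f : AddCircle T → ℂ) =ᵐ[μ] fun x => zfun x * (f : AddCircle T → ℂ) x :=
  mulCLM_coe _ _ _ f

lemma conjL2_coe (f : L2) :
    (conjL2 f : AddCircle T → ℂ)
      =ᵐ[μ] fun x => (starRingEnd ℂ) ((f : AddCircle T → ℂ) x) :=
  MemLp.coeFn_toLp _

lemma conj_mul_self_one {a : ℂ} (h : ‖a‖ = 1) : (starRingEnd ℂ) a * a = 1 := by
  rw [mul_comm, Complex.mul_conj, Complex.normSq_eq_norm_sq, h]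
  norm_num

lemma zfun_norm_one (x : AddCircle T) : ‖zfun x‖ = 1 := by simp [zfun, Circle.norm_coe]

lemma InnerData.C_coe (U : InnerData) (f : L2) :
    (U.C f : AddCircle T → ℂ)
      =ᵐ[μ] fun x => U.u x *
        (starRingEnd ℂ) (zfun x * (f : AddCircle T → ℂ) x) := by
  have h1 := Mz_coe f
  have h2 := conjL2_coe (Mz f)
  have h3 := mulCLM_coe U.u U.meas U.bd (conjL2 (Mz f))
  filter_upwards [h1, h2, h3] with x hx1 hx2 hx3
  show (U.M (conjL2 (Mz f)) : AddCircle T → ℂ) x = _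
  rw [show (U.M (conjL2 (Mz f)) : AddCircle T → ℂ) x
      = U.u x * (conjL2 (Mz f) : AddCircle T → ℂ) x from hx3, hx2, hx1]

/-- `C` is an involution. -/
lemma InnerData.C_C (U : InnerData) (f : L2) : U.C (U.C f) = f := by
  apply Lp.ext (p := 2) (μ := μ)
  filter_upwards [U.C_coe (U.C f), U.C_coe f, U.unim] with x h1 h2 hu
  rw [h1, h2]
  have hz := conj_mul_self_one (zfun_norm_one x)
  have hu' := conj_mul_self_one hu
  have h3 : ((starRingEnd ℂ) (U.u x) * U.u x) * ((starRingEnd ℂ) (zfun x) * zfun x) = 1 := by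
    rw [hz, hu', one_mul]
  simp only [map_mul, Complex.conj_conj]
  linear_combination ((f : AddCircle T → ℂ) x) * h3

/-- `C` is a conjugation: `⟪C f, C g⟫ = ⟪g, f⟫`. -/
lemma InnerData.inner_C_C (U : InnerData) (f g : L2) :
    ⟪U.C f, U.C g⟫ = ⟪g, f⟫ := by
  rw [MeasureTheory.L2.inner_def, MeasureTheory.L2.inner_def]
  refine integral_congr_ae ?_
  filter_upwards [U.C_coe f, U.C_coe g, U.unim] with x h1 h2 hu
  rw [h1, h2]
  have hz := conj_mul_self_one (zfun_norm_one x)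
  have hu' := conj_mul_self_one hu
  have h3 : ((starRingEnd ℂ) (U.u x) * U.u x) * ((starRingEnd ℂ) (zfun x) * zfun x) = 1 := by
    rw [hz, hu', one_mul]
  simp only [RCLike.inner_apply, map_mul, Complex.conj_conj]
  linear_combination ((starRingEnd ℂ) ((g : AddCircle T → ℂ) x) * (f : AddCircle T → ℂ) x) * h3

/-- The core pointwise identity: `⟪C a, M_z (C b)⟫ = ⟪b, M_z a⟫`. -/
lemma InnerData.inner_C_Mz_C (U : InnerData) (a b : L2) :
    ⟪U.C a, Mz (U.C b)⟫ = ⟪b, Mz a⟫ := by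
  rw [MeasureTheory.L2.inner_def, MeasureTheory.L2.inner_def]
  refine integral_congr_ae ?_
  filter_upwards [U.C_coe a, U.C_coe b, Mz_coe (U.C b), Mz_coe a, U.unim]
    with x h1 h2 h3 h4 hu
  rw [h1, h3, h2, h4]
  have hz := conj_mul_self_one (zfun_norm_one x)
  have hu' := conj_mul_self_one hu
  have h5 : ((starRingEnd ℂ) (U.u x) * U.u x) * ((starRingEnd ℂ) (zfun x) * zfun x) = 1 := by
    rw [hz, hu', one_mul]
  simp only [RCLike.inner_apply, map_mul, Complex.conj_conj]
  linear_combination ((starRingEnd ℂ) ((b : AddCircle T → ℂ) x) *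
    (zfun x * (a : AddCircle T → ℂ) x)) * h5

lemma fourierCoeff_Mz (f : L2) (n : ℤ) :
    fourierCoeff ((Mz f : L2) : AddCircle T → ℂ) n
      = fourierCoeff ((f : L2) : AddCircle T → ℂ) (n - 1) := by
  unfold fourierCoeff
  rw [integral_congr_ae (by
    filter_upwards [Mz_coe f] with x hx
    rw [hx] : (fun x => fourier (-n) x • (Mz f : AddCircle T → ℂ) x)
      =ᵐ[μ] fun x => fourier (-n) x • (zfun x * (f : AddCircle T → ℂ) x))]
  refine integral_congr_ae ?_
  filter_upwards with x
  have h : fourier (-n) x * zfun x = fourier (-(n - 1)) x := by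
    unfold zfun
    rw [show (-(n - 1) : ℤ) = -n + 1 by ring, fourier_add]
  simp only [smul_eq_mul]
  calc fourier (-n) x * (zfun x * (f : AddCircle T → ℂ) x)
      = (fourier (-n) x * zfun x) * (f : AddCircle T → ℂ) x := by ring
    _ = fourier (-(n - 1)) x * (f : AddCircle T → ℂ) x := by rw [h]

lemma fourierCoeff_conjL2 (f : L2) (n : ℤ) :
    fourierCoeff ((conjL2 f : L2) : AddCircle T → ℂ) n
      = (starRingEnd ℂ) (fourierCoeff ((f : L2) : AddCircle T → ℂ) (-n)) := by
  unfold fourierCoeff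
  rw [← integral_conj]
  refine integral_congr_ae ?_
  filter_upwards [conjL2_coe f] with x hx
  rw [hx]
  simp only [smul_eq_mul, map_mul, neg_neg]
  rw [← fourier_neg]

/-- Parseval: if for each `n` one of the Fourier coefficients vanishes, the inner
product is zero. -/
lemma inner_eq_zero_of_repr {a b : L2}
    (h : ∀ n : ℤ, fourierBasis.repr a n = 0 ∨ fourierBasis.repr b n = 0) :
    ⟪a, b⟫ = 0 := by
  rw [← fourierBasis.repr.inner_map_map a b, lp.inner_eq_tsum]
  convert tsum_zero with n
  rcases h n with h0 | h0 <;> simp [h0]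

lemma fourierLp_mem_H2 {m : ℤ} (hm : 0 ≤ m) : (fourierLp 2 m : L2) ∈ H2 := by
  intro k hk
  have : (fourierLp 2 m : L2) = fourierBasis m := by
    rw [coe_fourierBasis]
  rw [this, fourierBasis.repr_self, lp.single_apply]
  exact dif_neg (by omega)

lemma inner_orthogonalProjection_eq {K : Submodule ℂ L2} [CompleteSpace K]
    {w : L2} (v : L2) (hw : w ∈ K) :
    ⟪w, (K.orthogonalProjectionOnto v : L2)⟫ = ⟪w, v⟫ := by
  have h := Submodule.sub_starProjection_mem_orthogonal (K := K) v
  have h0 : ⟪w, v - (K.orthogonalProjectionOnto v : L2)⟫ = 0 :=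
    (Submodule.mem_orthogonal K _).mp h w hw
  rw [inner_sub_right] at h0
  linear_combination -h0

/-- `C` maps `K_u` into itself. -/
lemma InnerData.C_mem_Ku (U : InnerData) {f : L2} (hf : f ∈ U.Ku) :
    U.C f ∈ U.Ku := by
  obtain ⟨hf1, hf2⟩ := Submodule.mem_inf.mp hf
  refine Submodule.mem_inf.mpr ⟨?_, ?_⟩
  · -- `C f ∈ H²`
    intro n hn
    rw [fourierBasis_repr]
    set m : ℤ := -(n + 1) with hmdef
    have hm : 0 ≤ m := by omega
    set e : L2 := fourierLp 2 m with hedef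
    have hMe : U.M e ∈ U.uH2 := ⟨e, fourierLp_mem_H2 hm, rfl⟩
    have hinner : ⟪U.M e, f⟫ = 0 := (Submodule.mem_orthogonal _ _).mp hf2 _ hMe
    have key : fourierCoeff ((U.C f : L2) : AddCircle T → ℂ) n
        = (starRingEnd ℂ) ⟪U.M e, f⟫ := by
      rw [MeasureTheory.L2.inner_def, ← integral_conj]
      unfold fourierCoeff
      refine integral_congr_ae ?_
      filter_upwards [U.C_coe f, mulCLM_coe U.u U.meas U.bd e,
        coeFn_fourierLp (T := T) 2 m] with x h1 h2 h3
      rw [h1, show (U.M e : AddCircle T → ℂ) x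
        = U.u x * (e : AddCircle T → ℂ) x from h2, h3]
      have hfz : fourier (-n) x * (starRingEnd ℂ) (zfun x) = fourier m x := by
        unfold zfun
        rw [hmdef, show (-(n + 1) : ℤ) = -n + -1 by ring, fourier_add, ← fourier_neg]
      simp only [RCLike.inner_apply, smul_eq_mul, map_mul, Complex.conj_conj]
      linear_combination (U.u x * (starRingEnd ℂ) ((f : AddCircle T → ℂ) x)) * hfz
    rw [key, hinner, map_zero]
  · -- `C f ⊥ uH²`
    rw [Submodule.mem_orthogonal]
    intro v hv
    obtain ⟨g, hg, rfl⟩ := hv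
    show ⟪U.M g, U.C f⟫ = 0
    have key : ⟪U.M g, U.C f⟫ = (starRingEnd ℂ) ⟪conjL2 (Mz g), f⟫ := by
      rw [MeasureTheory.L2.inner_def, MeasureTheory.L2.inner_def, ← integral_conj]
      refine integral_congr_ae ?_
      filter_upwards [U.C_coe f, mulCLM_coe U.u U.meas U.bd g, conjL2_coe (Mz g),
        Mz_coe g, U.unim] with x h1 h2 h3 h4 hu
      rw [h1, show (U.M g : AddCircle T → ℂ) x
        = U.u x * (g : AddCircle T → ℂ) x from h2]
      simp only [RCLike.inner_apply, map_mul, Complex.conj_conj]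
      rw [h3, h4]
      have hu' := conj_mul_self_one hu
      simp only [map_mul, Complex.conj_conj]
      linear_combination ((starRingEnd ℂ) (zfun x) * (starRingEnd ℂ) ((g : AddCircle T → ℂ) x) *
        (starRingEnd ℂ) ((f : AddCircle T → ℂ) x)) * hu'
    rw [key]
    have h0 : ⟪conjL2 (Mz g), f⟫ = 0 := by
      refine inner_eq_zero_of_repr fun n => ?_
      rcases lt_or_ge n 0 with hn | hn
      · exact Or.inr (hf1 n hn)
      · left
        rw [fourierBasis_repr, fourierCoeff_conjL2, fourierCoeff_Mz]
        have : fourierCoeff ((g : L2) : AddCircle T → ℂ) (-n - 1) = 0 := by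
          have := hg (-n - 1) (by omega)
          rwa [fourierBasis_repr] at this
        rw [this, map_zero]
    rw [h0, map_zero]

/-- `C` maps `K_u^⊥` into itself. -/
lemma InnerData.C_mem_KP (U : InnerData) {f : L2} (hf : f ∈ U.KP) :
    U.C f ∈ U.KP := by
  rw [InnerData.KP, Submodule.mem_orthogonal]
  intro v hv
  have h1 : ⟪v, U.C f⟫ = ⟪U.C (U.C v), U.C f⟫ := by rw [U.C_C v]
  rw [h1, U.inner_C_C]
  have h2 : ⟪U.C v, f⟫ = 0 := (Submodule.mem_orthogonal _ _).mp hf _ (U.C_mem_Ku hv)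
  rw [← inner_conj_symm, h2, map_zero]

/-- `C_u D_u C_u = D_u^*`: the dual compressed shift is complex symmetric
with respect to the conjugation `C_u` (which preserves `K_u^⊥`). -/
theorem Du_complex_symmetric (U : InnerData) :
    (∀ f : L2, f ∈ U.KP → U.C f ∈ U.KP) ∧
    (∀ f g : U.KP, (g : L2) = U.C (f : L2) →
      U.C (U.Du g : L2) = ((ContinuousLinearMap.adjoint U.Du) f : L2)) := by
  refine ⟨fun f hf => U.C_mem_KP hf, fun f g hg => ?_⟩
  set x : L2 := U.C (U.Du g : L2) with hxdef
  set y : L2 := ((ContinuousLinearMap.adjoint U.Du) f : L2) with hydef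
  have hx : x ∈ U.KP := U.C_mem_KP (U.Du g).2
  have hy : y ∈ U.KP := ((ContinuousLinearMap.adjoint U.Du) f).2
  have key : ∀ h : U.KP, ⟪x, (h : L2)⟫ = ⟪y, (h : L2)⟫ := by
    intro h
    have hDu : ((U.Du g : U.KP) : L2)
        = (U.KP.orthogonalProjectionOnto (Mz (g : L2)) : L2) := rfl
    have hx1 : ⟪x, (h : L2)⟫ = ⟪x, U.C (U.C (h : L2))⟫ := by rw [U.C_C]
    rw [hx1, hxdef, U.inner_C_C, hDu,
      inner_orthogonalProjection_eq _ (U.C_mem_KP h.2), hg,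
      U.inner_C_Mz_C]
    have hy1 : ⟪y, (h : L2)⟫
        = ⟪(ContinuousLinearMap.adjoint U.Du) f, h⟫ := rfl
    rw [hy1, ContinuousLinearMap.adjoint_inner_left]
    have hDu2 : ((U.Du h : U.KP) : L2)
        = (U.KP.orthogonalProjectionOnto (Mz (h : L2)) : L2) := rfl
    have : (⟪f, U.Du h⟫ : ℂ) = ⟪(f : L2), ((U.Du h : U.KP) : L2)⟫ := rfl
    rw [this, hDu2, inner_orthogonalProjection_eq _ f.2]
  have hsub : x - y ∈ U.KP := Submodule.sub_mem _ hx hy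
  have h0 : ⟪x - y, x - y⟫ = (0 : ℂ) := by
    have h1 := key ⟨x - y, hsub⟩
    simp only [Submodule.coe_mk] at h1
    rw [inner_sub_left, h1, sub_self]
  exact sub_eq_zero.mp (inner_self_eq_zero.mp h0)

end Paper
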